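/- For every polynomial p(X) ∈ F[X] of degree strictly less than n and every z ∈ F, Σ_{x ∈ H} u_H(z, x) · p(x) = p*(z), where p*(X) is the remainder of n · X^{n−1} · p(X) upon division by X^n − 1. -/

import Mathlib

open Polynomial

/-- The generalized derivative kernel `u_H(x, y) = ∑_{i=0}^{n-1} x^i · y^(n-1-i)` of the
vanishing polynomial `Z_H(X) = X^n - 1`. -/
def genDerivKernel {F : Type*} [Field F] (n : ℕ) (x y : F) : F :=
  ∑ i ∈ Finset.range n, x ^ i * y ^ (n - 1 - i)

lemma genDerivKernel_self {F : Type*} [Field F] (n : ℕ) (x : F) :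
    genDerivKernel n x x = n * x ^ (n - 1) := by
  unfold genDerivKernel
  have h : ∀ i ∈ Finset.range n, x ^ i * x ^ (n - 1 - i) = x ^ (n - 1) := by
    intro i hi
    rw [← pow_add]
    congr 1
    have := Finset.mem_range.mp hi
    omega
  rw [Finset.sum_congr rfl h, Finset.sum_const, Finset.card_range, nsmul_eq_mul]

lemma genDerivKernel_mul_sub {F : Type*} [Field F] (n : ℕ) (x y : F) :
    genDerivKernel n x y * (x - y) = x ^ n - y ^ n :=
  geom_sum₂_mul x y n

/-- For every polynomial `p(X)` of degree strictly less than `n` and every `z ∈ F`,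
`∑_{x ∈ H} u_H(z, x) · p(x) = p*(z)`, where `p*(X)` is the remainder of
`n · X^(n-1) · p(X)` upon division by `X^n - 1` (note `u_H(X,X) = n·X^(n-1)`).
Here `H = {g^0, …, g^(n-1)}` for a primitive `n`-th root of unity `g` in a field `F`
in which `n` is nonzero. -/
theorem genDerivKernel_inner_product {F : Type*} [Field F] (n : ℕ) (hn0 : 0 < n)
    (hn : (n : F) ≠ 0) (g : F) (hg : IsPrimitiveRoot g n) (p : F[X])
    (hp : p.degree < n) (z : F) :
    ∑ k ∈ Finset.range n, genDerivKernel n z (g ^ k) * p.eval (g ^ k) =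
      ((C (n : F) * X ^ (n - 1) * p) % (X ^ n - 1)).eval z := by
  classical
  have hM : ((X : F[X]) ^ n - 1).Monic := by
    simpa using monic_X_pow_sub_C (1 : F) hn0.ne'
  have hmod : (C (n : F) * X ^ (n - 1) * p) % (X ^ n - 1)
      = (C (n : F) * X ^ (n - 1) * p) %ₘ (X ^ n - 1) := by
    rw [Polynomial.mod_def, hM.leadingCoeff, inv_one, map_one, mul_one]
  set A : F[X] := C (n : F) * X ^ (n - 1) * p with hA
  set r : F[X] := A %ₘ (X ^ n - 1) with hr
  -- the polynomial whose evaluation gives the LHS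
  set q : F[X] := ∑ k ∈ Finset.range n,
    C (p.eval (g ^ k)) * ∑ i ∈ Finset.range n, C ((g ^ k) ^ (n - 1 - i)) * X ^ i with hqdef
  have hqeval : ∀ w : F, q.eval w
      = ∑ k ∈ Finset.range n, genDerivKernel n w (g ^ k) * p.eval (g ^ k) := by
    intro w
    rw [hqdef, eval_finset_sum]
    refine Finset.sum_congr rfl fun k _ => ?_
    rw [eval_mul, eval_C, eval_finset_sum, genDerivKernel, Finset.mul_sum, Finset.sum_mul]
    refine Finset.sum_congr rfl fun i _ => ?_
    simp [mul_comm, mul_left_comm]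
  -- roots of unity have n-th power 1
  have hpow1 : ∀ k : ℕ, (g ^ k) ^ n = 1 := fun k => by
    rw [← pow_mul, mul_comm, pow_mul, hg.pow_eq_one, one_pow]
  -- evaluation of r at points of H
  have hreval : ∀ m : ℕ, r.eval (g ^ m) = (n : F) * (g ^ m) ^ (n - 1) * p.eval (g ^ m) := by
    intro m
    have h := congrArg (eval (g ^ m)) (modByMonic_add_div A (X ^ n - 1))
    simp only [eval_add, eval_mul, eval_sub, eval_pow, eval_X, eval_one, hpow1 m, sub_self,
      zero_mul, add_zero] at h
    rw [hr, h, hA]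
    simp
  -- evaluation of q at points of H
  have hqroot : ∀ m ∈ Finset.range n, q.eval (g ^ m)
      = (n : F) * (g ^ m) ^ (n - 1) * p.eval (g ^ m) := by
    intro m hm
    rw [hqeval]
    rw [Finset.sum_eq_single m, genDerivKernel_self]
    · intro k hk hkm
      have hne : g ^ m ≠ g ^ k := fun hEq =>
        hkm (hg.pow_inj (Finset.mem_range.mp hk) (Finset.mem_range.mp hm) hEq.symm)
      have h0 : genDerivKernel n (g ^ m) (g ^ k) * (g ^ m - g ^ k) = 0 := by
        rw [genDerivKernel_mul_sub, hpow1, hpow1, sub_self]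
      rcases mul_eq_zero.mp h0 with h | h
      · rw [h, zero_mul]
      · exact absurd (sub_eq_zero.mp h) hne
    · intro h; exact absurd hm h
  -- degree bounds
  have hqdeg : q.degree < (n : ℕ) := by
    rw [hqdef]
    refine lt_of_le_of_lt (degree_sum_le _ _) ?_
    rw [Finset.sup_lt_iff (by exact_mod_cast WithBot.bot_lt_coe (n : ℕ))]
    intro k _
    refine lt_of_le_of_lt (degree_mul_le _ _) ?_
    refine lt_of_le_of_lt (add_le_add degree_C_le (degree_sum_le _ _)) ?_
    rw [zero_add]
    rw [Finset.sup_lt_iff (by exact_mod_cast WithBot.bot_lt_coe (n : ℕ))]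
    intro i hi
    refine lt_of_le_of_lt (degree_mul_le _ _) ?_
    refine lt_of_le_of_lt (add_le_add degree_C_le (degree_X_pow_le i)) ?_
    rw [zero_add]
    exact_mod_cast Nat.cast_lt.mpr (Finset.mem_range.mp hi)
  have hrdeg : r.degree < (n : ℕ) := by
    have := degree_modByMonic_lt A hM
    rwa [show ((X : F[X]) ^ n - 1) = X ^ n - C 1 by simp, degree_X_pow_sub_C hn0] at this
  -- q = r by agreeing on n points with degree < n
  have hqr : q = r := by
    have hsub : q - r = 0 := by
      apply Polynomial.eq_zero_of_natDegree_lt_card_of_eval_eq_zero' (q - r)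
        ((Finset.range n).image (g ^ ·))
      · intro x hx
        obtain ⟨m, hm, rfl⟩ := Finset.mem_image.mp hx
        rw [eval_sub, hqroot m hm, hreval m, sub_self]
      · rw [Finset.card_image_of_injOn (fun a ha b hb hab =>
          hg.pow_inj (Finset.mem_range.mp ha) (Finset.mem_range.mp hb) hab),
          Finset.card_range]
        rcases eq_or_ne (q - r) 0 with h | h
        · simpa [h] using hn0
        · exact natDegree_lt_iff_degree_lt h |>.mpr
            (lt_of_le_of_lt (degree_sub_le q r) (max_lt hqdeg hrdeg))
    exact sub_eq_zero.mp hsub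
  rw [hmod, ← hqr, hqeval z]
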